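/- Removing all edges incident to a single vertex v decreases the potential φ(G) = Σ_{u : deg(u) ≥ k}(deg(u) − k) by at most deg(v) + max(deg(v) − k, 0). In particular, if every vertex of G has degree ≤ k + d, then φ(G − v) ≥ φ(G) − (2d + k) for every v, and consequently if G can be brought into H_k by deleting edges at d vertices (all of degree ≤ k + d), then φ(G) ≤ d(2d + k) = 2d² + kd. -/

import Mathlib

/-- The graph obtained from `G` by removing all edges incident to a vertex of `S`. -/
def remSet {V : Type*} (G : SimpleGraph V) (S : Set V) : SimpleGraph V where
  Adj a b := G.Adj a b ∧ a ∉ S ∧ b ∉ S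
  symm := ⟨by rintro a b ⟨h, ha, hb⟩; exact ⟨h.symm, hb, ha⟩⟩
  loopless := ⟨by rintro a ⟨h, -, -⟩; exact G.irrefl h⟩

/-- The excess-degree potential `φ(G) = Σ_{v : deg v ≥ k} (deg v − k)`. -/
noncomputable def pot {V : Type*} [Fintype V] (k : ℕ) (G : SimpleGraph V) : ℝ :=
  ∑ v : V, max (((G.neighborSet v).ncard : ℝ) - (k : ℝ)) 0

lemma max_sub_max_le {x y : ℝ} (h : y ≤ x) : max x 0 - max y 0 ≤ x - y := by
  simp only [max_def]; split_ifs <;> linarith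

lemma remSet_nbr {V : Type*} (G : SimpleGraph V) (S : Set V) {u : V} (hu : u ∉ S) :
    (remSet G S).neighborSet u = G.neighborSet u \ S := by
  ext w
  simp only [SimpleGraph.mem_neighborSet, Set.mem_diff, remSet]
  tauto

lemma remSet_nbr_subset {V : Type*} (G : SimpleGraph V) (S : Set V) (u : V) :
    (remSet G S).neighborSet u ⊆ G.neighborSet u := by
  intro w hw; exact hw.1

lemma remSet_nbr_mem {V : Type*} (G : SimpleGraph V) (S : Set V) {u : V} (hu : u ∈ S) :
    (remSet G S).neighborSet u = ∅ := by
  ext w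
  simp only [SimpleGraph.mem_neighborSet, Set.mem_empty_iff_false, iff_false, remSet]
  tauto

lemma pot_drop {V : Type*} [Fintype V] (k : ℕ) (G : SimpleGraph V) (S : Set V) (v : V) :
    pot k (remSet G S) - pot k (remSet G (insert v S)) ≤
      ((G.neighborSet v).ncard : ℝ) + max (((G.neighborSet v).ncard : ℝ) - (k : ℝ)) 0 := by
  classical
  set G1 := remSet G S with hG1
  set G2 := remSet G (insert v S) with hG2
  set f1 : V → ℝ := fun u => max (((G1.neighborSet u).ncard : ℝ) - (k : ℝ)) 0 with hf1
  set f2 : V → ℝ := fun u => max (((G2.neighborSet u).ncard : ℝ) - (k : ℝ)) 0 with hf2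
  set b : V → ℝ := fun u => if u = v then max (((G.neighborSet v).ncard : ℝ) - (k : ℝ)) 0
    else (if G.Adj v u then 1 else 0) with hb
  have hsub : pot k G1 - pot k G2 = ∑ u : V, (f1 u - f2 u) := by
    rw [Finset.sum_sub_distrib]; rfl
  have hterm : ∀ u : V, f1 u - f2 u ≤ b u := by
    intro u
    by_cases huv : u = v
    · subst huv
      have h1 : f1 u ≤ max (((G.neighborSet u).ncard : ℝ) - (k : ℝ)) 0 := by
        apply max_le_max _ le_rfl
        apply sub_le_sub_right
        exact_mod_cast Set.ncard_le_ncard (remSet_nbr_subset G S u) (Set.toFinite _)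
      have h2 : (0:ℝ) ≤ f2 u := le_max_right _ _
      simp only [hb, if_pos rfl]
      linarith
    · by_cases huS : u ∈ S
      · have e1 : G1.neighborSet u = ∅ := remSet_nbr_mem G S huS
        have e2 : G2.neighborSet u = ∅ := remSet_nbr_mem G _ (Set.mem_insert_of_mem _ huS)
        have : f1 u = f2 u := by simp [hf1, hf2, e1, e2]
        have hb0 : (0:ℝ) ≤ b u := by
          simp only [hb, if_neg huv]; split_ifs <;> norm_num
        linarith
      · have e2 : G2.neighborSet u = G1.neighborSet u \ {v} := by
          rw [hG1, hG2, remSet_nbr G S huS, remSet_nbr G _ (by simp [huv, huS]),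
            ← Set.union_singleton, ← Set.diff_diff]
        by_cases hv : v ∈ G1.neighborSet u
        · have hadj : G.Adj v u := (hv.1).symm
          have hn : (G1.neighborSet u \ {v}).ncard = (G1.neighborSet u).ncard - 1 :=
            Set.ncard_diff_singleton_of_mem hv
          have hpos : 0 < (G1.neighborSet u).ncard :=
            (Set.ncard_pos (Set.toFinite _)).2 ⟨v, hv⟩
          have hc : ((G2.neighborSet u).ncard : ℝ) = ((G1.neighborSet u).ncard : ℝ) - 1 := by
            rw [e2, hn, Nat.cast_sub hpos]; norm_num
          have := max_sub_max_le (x := ((G1.neighborSet u).ncard : ℝ) - k)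
            (y := ((G2.neighborSet u).ncard : ℝ) - k) (by rw [hc]; linarith)
          simp only [hb, if_neg huv, if_pos hadj]
          simp only [hf1, hf2]
          rw [hc] at this ⊢
          linarith
        · have : f1 u = f2 u := by
            simp [hf1, hf2, e2, Set.diff_singleton_eq_self hv]
          have hb0 : (0:ℝ) ≤ b u := by
            simp only [hb, if_neg huv]; split_ifs <;> norm_num
          linarith
  have hsum : ∑ u : V, (f1 u - f2 u) ≤ ∑ u : V, b u :=
    Finset.sum_le_sum (fun u _ => hterm u)
  have hbsum : ∑ u : V, b u =
      max (((G.neighborSet v).ncard : ℝ) - (k : ℝ)) 0 + ((G.neighborSet v).ncard : ℝ) := by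
    rw [Finset.sum_eq_sum_sdiff_singleton_add (Finset.mem_univ v) b]
    have hbv : b v = max (((G.neighborSet v).ncard : ℝ) - (k : ℝ)) 0 := by
      simp [hb]
    have h1 : ∑ u ∈ Finset.univ \ {v}, (if u = v then max (((G.neighborSet v).ncard : ℝ) - (k : ℝ)) 0
        else (if G.Adj v u then 1 else 0)) = ∑ u ∈ Finset.univ \ {v}, (if G.Adj v u then (1:ℝ) else 0) := by
      apply Finset.sum_congr rfl
      intro u hu
      rw [Finset.mem_sdiff, Finset.mem_singleton] at hu
      rw [if_neg hu.2]
    rw [hbv]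
    simp only [hb]
    rw [h1]
    have h2 : ∑ u ∈ Finset.univ \ {v}, (if G.Adj v u then (1:ℝ) else 0) =
        ∑ u : V, (if G.Adj v u then (1:ℝ) else 0) := by
      apply Finset.sum_subset (Finset.sdiff_subset)
      intro u _ hu
      rw [Finset.mem_sdiff, Finset.mem_singleton] at hu
      have : u = v := by tauto
      subst this
      simp
    rw [h2, Finset.sum_boole]
    have : (G.neighborSet v).ncard = (Finset.univ.filter (fun u => G.Adj v u)).card := by
      rw [Set.ncard_eq_toFinset_card']
      congr 1
      ext u
      simp [SimpleGraph.mem_neighborSet]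
    rw [this]
    ring
  rw [hsub]
  rw [hbsum] at hsum
  linarith

lemma remSet_empty {V : Type*} (G : SimpleGraph V) : remSet G ∅ = G := by
  ext a b; simp [remSet]

/-- (a) Removing all edges at a single vertex `v` decreases the potential `φ` by at most
`deg v + max(deg v − k, 0)`.  (b) Hence if every vertex of `G` has degree `≤ k + d`, then
`φ(G − v) ≥ φ(G) − (2d + k)` for every `v`.  (c) Consequently, if `G` (with all degrees
`≤ k + d`) can be brought into `H_k` by deleting all edges at some set of `d` vertices,
then `φ(G) ≤ d·(2d + k)`. -/
theorem stmt_18 {V : Type*} [Fintype V] (k d : ℕ) (G : SimpleGraph V) :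
    (∀ v : V, pot k G - pot k (remSet G {v}) ≤
      ((G.neighborSet v).ncard : ℝ) + max (((G.neighborSet v).ncard : ℝ) - (k : ℝ)) 0) ∧
    ((∀ u : V, (G.neighborSet u).ncard ≤ k + d) →
      ∀ v : V, pot k G - (2 * (d : ℝ) + (k : ℝ)) ≤ pot k (remSet G {v})) ∧
    ((∀ u : V, (G.neighborSet u).ncard ≤ k + d) →
      ∀ S : Finset V, S.card = d →
        (∀ u : V, ((remSet G (S : Set V)).neighborSet u).ncard ≤ k) →
        pot k G ≤ (d : ℝ) * (2 * (d : ℝ) + (k : ℝ))) := by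
  classical
  have parta : ∀ v : V, pot k G - pot k (remSet G {v}) ≤
      ((G.neighborSet v).ncard : ℝ) + max (((G.neighborSet v).ncard : ℝ) - (k : ℝ)) 0 := by
    intro v
    have hins : insert v (∅ : Set V) = {v} := by simp
    have := pot_drop k G ∅ v
    rwa [remSet_empty, hins] at this
  have hbound : (∀ u : V, (G.neighborSet u).ncard ≤ k + d) → ∀ v : V,
      ((G.neighborSet v).ncard : ℝ) + max (((G.neighborSet v).ncard : ℝ) - (k : ℝ)) 0 ≤
        2 * (d : ℝ) + (k : ℝ) := by
    intro h v
    have h1 : ((G.neighborSet v).ncard : ℝ) ≤ (k : ℝ) + d := by exact_mod_cast h v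
    have h2 : max (((G.neighborSet v).ncard : ℝ) - (k : ℝ)) 0 ≤ (d : ℝ) :=
      max_le (by linarith) (by positivity)
    linarith
  refine ⟨parta, fun h v => by have := parta v; have := hbound h v; linarith, ?_⟩
  intro h S hcard hdeg
  have main : ∀ T : Finset V, pot k G - pot k (remSet G (T : Set V)) ≤
      (T.card : ℝ) * (2 * (d : ℝ) + (k : ℝ)) := by
    intro T
    induction T using Finset.induction with
    | empty => simp [remSet_empty]
    | @insert v T hvT ih =>
      have hd := pot_drop k G (T : Set V) v
      have hb := hbound h v
      rw [Finset.coe_insert, Finset.card_insert_of_notMem hvT]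
      push_cast
      nlinarith [hd, hb, ih]
  have hzero : pot k (remSet G (S : Set V)) = 0 := by
    apply Finset.sum_eq_zero
    intro u _
    have : (((remSet G (S : Set V)).neighborSet u).ncard : ℝ) ≤ (k : ℝ) := by
      exact_mod_cast hdeg u
    simp [max_eq_right, sub_nonpos.2 this]
  have := main S
  rw [hzero, hcard] at this
  linarith
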